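/- For the sequence λ_0 = 0, λ_{n+1} = (1/2)(λ_n + sqrt(λ_n^2 + 4)), one has lim_{n→∞} (λ_{n+1}^2 - λ_n^2) = 2. -/
import Mathlib


noncomputable def lam : ℕ → ℝ
  | 0 => 0
  | n + 1 => (lam n + Real.sqrt (lam n ^ 2 + 4)) / 2

lemma lam_nonneg : ∀ n, 0 ≤ lam n := by
  intro n
  induction n with
  | zero => simp [lam]
  | succ n ih =>
    have hs : 0 ≤ Real.sqrt (lam n ^ 2 + 4) := Real.sqrt_nonneg _
    simp only [lam]
    linarith

lemma lam_key (n : ℕ) : lam (n+1) ^ 2 = lam n * lam (n+1) + 1 := by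
  have h : Real.sqrt (lam n ^ 2 + 4) ^ 2 = lam n ^ 2 + 4 := by
    rw [Real.sq_sqrt]; positivity
  show ((lam n + Real.sqrt (lam n ^ 2 + 4)) / 2) ^ 2
      = lam n * ((lam n + Real.sqrt (lam n ^ 2 + 4)) / 2) + 1
  nlinarith [h]

lemma lam_mono (n : ℕ) : lam n ≤ lam (n+1) := by
  have h : lam n ≤ Real.sqrt (lam n ^ 2 + 4) := by
    have := Real.sqrt_le_sqrt (show lam n ^ 2 ≤ lam n ^ 2 + 4 by linarith)
    rwa [Real.sqrt_sq (lam_nonneg n)] at this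
  show lam n ≤ (lam n + Real.sqrt (lam n ^ 2 + 4)) / 2
  linarith

lemma lam_sq_ge (n : ℕ) : (n : ℝ) ≤ lam n ^ 2 := by
  induction n with
  | zero => simp [lam]
  | succ n ih =>
    have h1 := lam_key n
    have h2 := lam_mono n
    have h3 := lam_nonneg n
    push_cast
    nlinarith

lemma lam_pos (n : ℕ) : 0 < lam (n+1) := by
  have h := lam_sq_ge (n+1)
  have h0 := lam_nonneg (n+1)
  have : (0:ℝ) < (n:ℝ)+1 := by positivity
  push_cast at h
  nlinarith

lemma lam_diff (n : ℕ) : lam (n+1) ^ 2 - lam n ^ 2 = 2 - 1 / lam (n+1) ^ 2 := by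
  have hk := lam_key n
  have hp := lam_pos n
  have hne : lam (n+1) ^ 2 ≠ 0 := by positivity
  field_simp
  nlinarith [hk]

theorem stmt_6 :
    Filter.Tendsto (fun n => lam (n + 1) ^ 2 - lam n ^ 2) Filter.atTop (nhds 2) := by
  have heq : (fun n => lam (n + 1) ^ 2 - lam n ^ 2)
      = fun n => 2 - 1 / lam (n+1) ^ 2 := funext lam_diff
  rw [heq]
  have h0 : Filter.Tendsto (fun n : ℕ => 1 / lam (n+1) ^ 2) Filter.atTop (nhds 0) := by
    apply squeeze_zero (fun n => by positivity) (g := fun n : ℕ => 1 / (n+1 : ℝ))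
    · intro n
      apply div_le_div_of_nonneg_left (by norm_num) (by positivity)
      have := lam_sq_ge (n+1)
      push_cast at this ⊢
      linarith
    · exact tendsto_one_div_add_atTop_nhds_zero_nat
  have := Filter.Tendsto.const_sub 2 h0
  simpa using this
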